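/- arXiv:2602.02117 — 5 statements merged into one kernel-verified Lean document; each statement's English description precedes it below -/
import Mathlib

section
/- Let E and F be finite-dimensional real inner product spaces, let Γ ⊆ E and Q ⊆ F be nonempty, convex, compact sets, and let L : E × F → ℝ be continuous on Γ × Q, affine in its first argument on Γ and convex in its second argument on Q. Then there exists a saddle point (ρ*, q*) ∈ Γ × Q such that L(ρ, q*) ≤ L(ρ*, q*) ≤ L(ρ*, q) for all ρ ∈ Γ and all q ∈ Q. -/
/-- A lower semicontinuous real function on a nonempty compact space attains its minimum. -/
private lemma lsc_exists_min {X : Type*} [TopologicalSpace X] [CompactSpace X] [Nonempty X]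
    {g : X → ℝ} (hg : LowerSemicontinuous g) : ∃ x, ∀ y, g x ≤ g y := by
  have h := (isCompact_univ (X := X)).inter_iInter_nonempty
    (fun y => {x | g x ≤ g y}) (fun y => hg.isClosed_preimage (g y)) ?_
  · obtain ⟨x, -, hx⟩ := h
    exact ⟨x, fun y => Set.mem_iInter.mp hx y⟩
  · intro u
    rcases u.eq_empty_or_nonempty with rfl | hu
    · simp
    · obtain ⟨y0, hy0, hmin⟩ := u.exists_min_image g hu
      exact ⟨y0, Set.mem_univ _, Set.mem_iInter₂.mpr fun y hy => hmin y hy⟩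

/-- Existence of a saddle point for losses affine in the first argument and
convex in the second, over nonempty convex compact sets in finite-dimensional real inner
product spaces. -/
theorem saddle_point_exists
    {E F : Type*} [NormedAddCommGroup E] [InnerProductSpace ℝ E] [FiniteDimensional ℝ E]
    [NormedAddCommGroup F] [InnerProductSpace ℝ F] [FiniteDimensional ℝ F]
    (Γ : Set E) (Q : Set F)
    (hΓne : Γ.Nonempty) (hΓconv : Convex ℝ Γ) (hΓcomp : IsCompact Γ)
    (hQne : Q.Nonempty) (hQconv : Convex ℝ Q) (hQcomp : IsCompact Q)
    (L : E → F → ℝ)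
    (hcont : ContinuousOn (fun p : E × F => L p.1 p.2) (Γ ×ˢ Q))
    (haff : ∀ t : ℝ, t ∈ Set.Icc (0:ℝ) 1 → ∀ ρ ∈ Γ, ∀ ρ' ∈ Γ, ∀ q ∈ Q,
      L (t • ρ + (1 - t) • ρ') q = t * L ρ q + (1 - t) * L ρ' q)
    (hconv : ∀ ρ ∈ Γ, ConvexOn ℝ Q (L ρ)) :
    ∃ ρs ∈ Γ, ∃ qs ∈ Q,
      (∀ ρ ∈ Γ, L ρ qs ≤ L ρs qs) ∧ (∀ q ∈ Q, L ρs qs ≤ L ρs q) := by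
  classical
  haveI : CompactSpace ↥Γ := isCompact_iff_compactSpace.mp hΓcomp
  haveI : CompactSpace ↥Q := isCompact_iff_compactSpace.mp hQcomp
  haveI : Nonempty ↥Γ := hΓne.to_subtype
  haveI : Nonempty ↥Q := hQne.to_subtype
  set f : ↥Γ → ↥Q → ℝ := fun ρ q => L ρ.1 q.1 with hfdef
  have hf : Continuous (fun p : ↥Γ × ↥Q => f p.1 p.2) := by
    have heq : (fun p : ↥Γ × ↥Q => f p.1 p.2) =
        (fun p : E × F => L p.1 p.2) ∘ (fun p : ↥Γ × ↥Q => ((p.1 : E), (p.2 : F))) := rfl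
    rw [heq]
    exact hcont.comp_continuous
      ((continuous_subtype_val.comp continuous_fst).prodMk
        (continuous_subtype_val.comp continuous_snd))
      (fun p => ⟨p.1.2, p.2.2⟩)
  have hf1 : ∀ q : ↥Q, Continuous (fun ρ : ↥Γ => f ρ q) := fun q =>
    hf.comp (continuous_id.prodMk continuous_const)
  have hf2 : ∀ ρ : ↥Γ, Continuous (fun q : ↥Q => f ρ q) := fun ρ =>
    hf.comp (continuous_const.prodMk continuous_id)
  have hbdd : ∀ q : ↥Q, BddAbove (Set.range fun ρ : ↥Γ => f ρ q) := fun q =>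
    (isCompact_range (hf1 q)).bddAbove
  set g : ↥Q → ℝ := fun q => ⨆ ρ : ↥Γ, f ρ q with hgdef
  have hg : LowerSemicontinuous g :=
    lowerSemicontinuous_ciSup hbdd fun ρ => (hf2 ρ).lowerSemicontinuous
  obtain ⟨qs, hqs⟩ := lsc_exists_min hg
  set β : ℝ := g qs with hβ
  -- Key finite claim, proved by convexity and separation.
  have claim : ∀ u : Finset ↥Q, ∃ ρ : ↥Γ, ∀ q ∈ u, β ≤ f ρ q := by
    intro u
    by_contra hcon
    push_neg at hcon
    set Φ : ↥Γ → (↥u → ℝ) := fun ρ i => f ρ i.1 with hΦ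
    have hΦcont : Continuous Φ := continuous_pi fun i => hf1 i.1
    have hAcomp : IsCompact (Set.range Φ) := isCompact_range hΦcont
    have hAconv : Convex ℝ (Set.range Φ) := by
      rintro a ⟨ρ1, rfl⟩ b ⟨ρ2, rfl⟩ s t hs ht hst
      have hmem : s • (ρ1 : E) + t • (ρ2 : E) ∈ Γ := hΓconv ρ1.2 ρ2.2 hs ht hst
      refine ⟨⟨_, hmem⟩, funext fun i => ?_⟩
      have h1t : (1 : ℝ) - s = t := by linarith
      have := haff s ⟨hs, by linarith⟩ ρ1.1 ρ1.2 ρ2.1 ρ2.2 i.1.1 i.1.2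
      rw [h1t] at this
      simp only [hΦ, hfdef, Pi.add_apply, Pi.smul_apply, smul_eq_mul]
      exact this
    set B : Set (↥u → ℝ) := {v | ∀ i, β ≤ v i} with hBdef
    have hBclosed : IsClosed B := by
      have : B = ⋂ i, {v : ↥u → ℝ | β ≤ v i} := by
        ext v; simp [hBdef, Set.mem_iInter]
      rw [this]
      exact isClosed_iInter fun i => isClosed_le continuous_const (continuous_apply i)
    have hBconv : Convex ℝ B := by
      intro a ha b hb s t hs ht hst
      intro i
      have h1 := ha i
      have h2 := hb i
      simp only [Pi.add_apply, Pi.smul_apply, smul_eq_mul]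
      have e1 : s * β ≤ s * a i := mul_le_mul_of_nonneg_left h1 hs
      have e2 : t * β ≤ t * b i := mul_le_mul_of_nonneg_left h2 ht
      have e3 : (s + t) * β = β := by rw [hst, one_mul]
      linarith [e1, e2, e3]
    have hdisj : Disjoint (Set.range Φ) B := by
      rw [Set.disjoint_left]
      rintro _ ⟨ρ, rfl⟩ hmem
      obtain ⟨q, hq, hlt⟩ := hcon ρ
      exact absurd (hmem ⟨q, hq⟩) (not_le.mpr hlt)
    obtain ⟨φ, uu, vv, hA, huv, hBsep⟩ :=
      geometric_hahn_banach_compact_closed hAconv hAcomp hBconv hBclosed hdisj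
    set lam : ↥u → ℝ := fun i => φ (Pi.single i 1) with hlam
    have hsingle : ∀ i : ↥u, (fun j => if i = j then (1:ℝ) else 0) = Pi.single i 1 := by
      intro i
      ext j
      rcases eq_or_ne i j with rfl | h
      · simp
      · simp [Pi.single_eq_of_ne (Ne.symm h), h]
    have hrep : ∀ v : ↥u → ℝ, φ v = ∑ i, v i * lam i := by
      intro v
      conv_lhs => rw [pi_eq_sum_univ v]
      rw [map_sum]
      refine Finset.sum_congr rfl fun i _ => ?_
      rw [hsingle i, map_smul, smul_eq_mul]
    have hconstβ : φ (fun _ : ↥u => β) = β * ∑ i, lam i := by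
      rw [hrep, Finset.mul_sum]
    have hβB : (fun _ : ↥u => β) ∈ B := fun i => le_refl β
    have h1 : vv < β * ∑ i, lam i := hconstβ ▸ hBsep _ hβB
    have hlamnn : ∀ i, 0 ≤ lam i := by
      intro i
      by_contra hneg
      push_neg at hneg
      set c : ℝ := (β * ∑ j, lam j - vv) / (-lam i) with hc
      have hcpos : 0 < c := div_pos (by linarith) (by linarith)
      have hmem : ((fun _ : ↥u => β) + c • (Pi.single i 1 : ↥u → ℝ)) ∈ B := by
        intro j
        have hnn : (0:ℝ) ≤ c * (Pi.single i 1 : ↥u → ℝ) j := by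
          refine mul_nonneg hcpos.le ?_
          rcases eq_or_ne j i with rfl | h
          · simp
          · simp [Pi.single_eq_of_ne h]
        simp only [Pi.add_apply, Pi.smul_apply, smul_eq_mul]
        linarith
      have hsep := hBsep _ hmem
      rw [map_add, map_smul, hconstβ] at hsep
      have hcl : c * -lam i = β * ∑ j, lam j - vv :=
        div_mul_cancel₀ _ (by linarith : -lam i ≠ 0)
      rw [mul_neg] at hcl
      have hli : φ (Pi.single i 1) = lam i := rfl
      simp only [smul_eq_mul, hli] at hsep
      linarith
    set S : ℝ := ∑ i, lam i with hS
    have hSnn : 0 ≤ S := Finset.sum_nonneg fun i _ => hlamnn i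
    have hSpos : 0 < S := by
      rcases hSnn.lt_or_eq with h | h
      · exact h
      · exfalso
        have hz : ∀ i ∈ Finset.univ, lam i = 0 :=
          (Finset.sum_eq_zero_iff_of_nonneg (fun i _ => hlamnn i)).mp h.symm
        obtain ⟨ρ0⟩ := (inferInstance : Nonempty ↥Γ)
        have hφ0 : φ (Φ ρ0) = 0 := by
          rw [hrep]
          exact Finset.sum_eq_zero fun i _ => by rw [hz i (Finset.mem_univ i), mul_zero]
        have h3 : φ (Φ ρ0) < uu := hA _ ⟨ρ0, rfl⟩
        have h4 : β * S = 0 := by rw [← h, mul_zero]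
        rw [hφ0] at h3
        linarith
    have hwsum : ∑ i : ↥u, lam i / S = 1 := by
      rw [← Finset.sum_div, ← hS]
      exact div_self (ne_of_gt hSpos)
    set qbar : F := ∑ i : ↥u, (lam i / S) • (i.1.1 : F) with hqbar
    have hqbarQ : qbar ∈ Q :=
      hQconv.sum_mem (fun i _ => div_nonneg (hlamnn i) hSnn) hwsum (fun i _ => i.1.2)
    have hub : ∀ ρ : ↥Γ, f ρ ⟨qbar, hqbarQ⟩ ≤ uu / S := by
      intro ρ
      have hjensen : L ρ.1 qbar ≤ ∑ i : ↥u, (lam i / S) * L ρ.1 i.1.1 :=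
        (hconv ρ.1 ρ.2).map_sum_le (fun i _ => div_nonneg (hlamnn i) hSnn) hwsum
          (fun i _ => i.1.2)
      have hsum : ∑ i : ↥u, (lam i / S) * L ρ.1 i.1.1 = φ (Φ ρ) / S := by
        rw [hrep, Finset.sum_div]
        refine Finset.sum_congr rfl fun i _ => ?_
        have hΦi : Φ ρ i = L ρ.1 i.1.1 := rfl
        rw [hΦi]
        ring
      have hφρ : φ (Φ ρ) < uu := hA _ ⟨ρ, rfl⟩
      have : L ρ.1 qbar ≤ φ (Φ ρ) / S := hsum ▸ hjensen
      have h5 : φ (Φ ρ) / S ≤ uu / S :=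
        div_le_div_of_nonneg_right hφρ.le hSpos.le
      exact this.trans h5
    have hgqbar : g ⟨qbar, hqbarQ⟩ ≤ uu / S := ciSup_le hub
    have hge : β ≤ uu / S := le_trans (hqs _) hgqbar
    have hlt : uu / S < β := by
      rw [div_lt_iff₀ hSpos]
      linarith
    linarith
  -- Finite intersection property gives the saddle point.
  have hFIP := (isCompact_univ (X := ↥Γ)).inter_iInter_nonempty
    (fun q : ↥Q => {ρ : ↥Γ | β ≤ f ρ q})
    (fun q => isClosed_le continuous_const (hf1 q))
    (fun u => by
      obtain ⟨ρ, hρ⟩ := claim u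
      exact ⟨ρ, Set.mem_univ _, Set.mem_iInter₂.mpr fun q hq => hρ q hq⟩)
  obtain ⟨ρs, -, hρs⟩ := hFIP
  have hρs' : ∀ q : ↥Q, β ≤ f ρs q := fun q => Set.mem_iInter.mp hρs q
  refine ⟨ρs.1, ρs.2, qs.1, qs.2, ?_, ?_⟩
  · intro ρ hρ
    have h1 : L ρ qs.1 ≤ β := le_ciSup (hbdd qs) (⟨ρ, hρ⟩ : ↥Γ)
    have h2 : β ≤ L ρs.1 qs.1 := hρs' qs
    linarith
  · intro q hq
    have h2 : β ≤ L ρs.1 q := hρs' ⟨q, hq⟩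
    have h3 : L ρs.1 qs.1 ≤ β := le_ciSup (hbdd qs) ρs
    linarith
end

section
/- Let ρ and σ be n×n real symmetric positive semidefinite matrices with trace 1 (density matrices), with σ positive definite. Then the quantum relative entropy satisfies D(ρ‖σ) := Tr(ρ log ρ) − Tr(ρ log σ) ≥ 0, with equality if and only if ρ = σ (Klein's inequality). -/
open Matrix

/-- The matrix logarithm of a real symmetric matrix, defined by applying `Real.log` to
the eigenvalues in a spectral decomposition (junk value `0` for non-Hermitian input). -/
noncomputable def matLog {n : ℕ} (A : Matrix (Fin n) (Fin n) ℝ) :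
    Matrix (Fin n) (Fin n) ℝ :=
  if h : A.IsHermitian then h.cfc Real.log else 0

/-- `Tr(ρ log ρ) := ∑ᵢ λᵢ log λᵢ` for a real symmetric matrix `ρ` with eigenvalues `λᵢ`,
with the convention `0 · log 0 = 0` (note `Real.log 0 = 0`). Junk value `0` for
non-Hermitian input. -/
noncomputable def trMatrixLogSelf {n : ℕ} (ρ : Matrix (Fin n) (Fin n) ℝ) : ℝ :=
  if h : ρ.IsHermitian then ∑ i, h.eigenvalues i * Real.log (h.eigenvalues i) else 0

lemma klein_pt {x y : ℝ} (hx : 0 ≤ x) (hy : 0 < y) :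
    x - y ≤ x * Real.log x - x * Real.log y := by
  rcases hx.eq_or_lt with h | h
  · simp [← h]; linarith
  · have hlog := Real.log_le_sub_one_of_pos (div_pos hy h)
    rw [Real.log_div hy.ne' h.ne'] at hlog
    have := mul_le_mul_of_nonneg_left hlog h.le
    have hx' : x * (y / x - 1) = y - x := by field_simp
    nlinarith

lemma klein_pt_eq {x y : ℝ} (hx : 0 ≤ x) (hy : 0 < y)
    (h : x * Real.log x - x * Real.log y = x - y) : x = y := by
  rcases hx.eq_or_lt with h0 | h0
  · rw [← h0] at h; simp at h; linarith
  · by_contra hne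
    have hd : y / x ≠ 1 := fun hc => hne ((div_eq_one_iff_eq h0.ne').mp hc).symm
    have hlog := Real.log_lt_sub_one_of_pos (div_pos hy h0) hd
    rw [Real.log_div hy.ne' h0.ne'] at hlog
    have := mul_lt_mul_of_pos_left hlog h0
    have hx' : x * (y / x - 1) = y - x := by field_simp
    nlinarith

lemma tr_diag_conj {n : ℕ} (A B : Matrix (Fin n) (Fin n) ℝ) (d e : Fin n → ℝ) :
    (diagonal d * A * (diagonal e * B)).trace = ∑ i, ∑ j, d i * (A i j * (e j * B j i)) := by
  simp only [Matrix.trace, Matrix.diag, Matrix.mul_apply, Matrix.diagonal_apply, ite_mul,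
    zero_mul, Finset.sum_ite_eq, Finset.mem_univ, if_true, Finset.mul_sum, Finset.sum_mul]
  exact Finset.sum_congr rfl fun i _ => Finset.sum_congr rfl fun j _ => by ring

lemma trace_mul_cfc {n : ℕ} (ρ σ : Matrix (Fin n) (Fin n) ℝ)
    (hρ : ρ.IsHermitian) (hσ : σ.IsHermitian) (f : ℝ → ℝ) :
    (ρ * hσ.cfc f).trace =
      ∑ i, ∑ j, hρ.eigenvalues i *
        ((star (hρ.eigenvectorUnitary : Matrix (Fin n) (Fin n) ℝ) *
          (hσ.eigenvectorUnitary : Matrix (Fin n) (Fin n) ℝ)) i j)^2 * f (hσ.eigenvalues j) := by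
  set U := (hρ.eigenvectorUnitary : Matrix (Fin n) (Fin n) ℝ) with hUdef
  set V := (hσ.eigenvectorUnitary : Matrix (Fin n) (Fin n) ℝ) with hVdef
  set W := star U * V with hW
  conv_lhs => rw [hρ.spectral_theorem]
  rw [Matrix.IsHermitian.cfc, RCLike.ofReal_real_eq_id]
  simp only [Function.comp_def, id_eq, Unitary.conjStarAlgAut_apply]
  have h1 : U * diagonal hρ.eigenvalues * star U *
      (V * diagonal (fun i => f (hσ.eigenvalues i)) * star V) =
      U * (diagonal hρ.eigenvalues * (W * ((diagonal fun i => f (hσ.eigenvalues i)) * star V))) := by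
    rw [hW]; simp only [mul_assoc]
  rw [h1, Matrix.trace_mul_comm]
  have h2 : diagonal hρ.eigenvalues * (W * ((diagonal fun i => f (hσ.eigenvalues i)) * star V)) * U =
      diagonal hρ.eigenvalues * W * ((diagonal fun i => f (hσ.eigenvalues i)) * (star V * U)) := by
    simp only [mul_assoc]
  rw [h2, tr_diag_conj]
  have hsW : star V * U = star W := by rw [hW, StarMul.star_mul, star_star]
  rw [hsW]
  refine Finset.sum_congr rfl fun i _ => Finset.sum_congr rfl fun j _ => ?_
  have : star W j i = W i j := by simp [Matrix.star_apply]
  rw [this]; ring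

lemma trace_eq_sum_eig {n : ℕ} (A : Matrix (Fin n) (Fin n) ℝ) (hA : A.IsHermitian) :
    A.trace = ∑ i, hA.eigenvalues i := by
  conv_lhs => rw [hA.spectral_theorem]
  rw [Unitary.conjStarAlgAut_apply, trace_mul_cycle, Unitary.coe_star_mul_self hA.eigenvectorUnitary, one_mul,
    RCLike.ofReal_real_eq_id]
  simp [Function.comp_def, trace_diagonal]


/-- Klein's inequality: for density matrices ρ, σ with σ positive definite,
the quantum relative entropy D(ρ‖σ) := Tr(ρ log ρ) − Tr(ρ log σ) is nonnegative, with
equality iff ρ = σ. -/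
theorem klein_inequality {n : ℕ} (ρ σ : Matrix (Fin n) (Fin n) ℝ)
    (hρ : ρ.PosSemidef) (hρtr : ρ.trace = 1)
    (hσ : σ.PosDef) (hσtr : σ.trace = 1) :
    0 ≤ trMatrixLogSelf ρ - (ρ * matLog σ).trace ∧
    (trMatrixLogSelf ρ - (ρ * matLog σ).trace = 0 ↔ ρ = σ) := by
  -- the easy direction first, before introducing abbreviations
  have reverse : ρ = σ → trMatrixLogSelf ρ - (ρ * matLog σ).trace = 0 := by
    rintro rfl
    have h' : ρ.IsHermitian := hρ.1
    unfold trMatrixLogSelf matLog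
    have h1 : star (h'.eigenvectorUnitary : Matrix (Fin n) (Fin n) ℝ) *
        (h'.eigenvectorUnitary : Matrix (Fin n) (Fin n) ℝ) = 1 :=
      Unitary.coe_star_mul_self h'.eigenvectorUnitary
    rw [dif_pos h', dif_pos h', trace_mul_cfc ρ ρ h' h' Real.log, h1]
    have hone : ∀ i j : Fin n, ((1 : Matrix (Fin n) (Fin n) ℝ) i j)^2
        = if i = j then 1 else 0 := by
      intro i j; simp [Matrix.one_apply]
    simp only [hone, mul_ite, mul_one, mul_zero, ite_mul, zero_mul,
      Finset.sum_ite_eq, Finset.mem_univ, if_true]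
    simp
  have hρ' : ρ.IsHermitian := hρ.1
  have hσ' : σ.IsHermitian := hσ.1
  set lam := hρ'.eigenvalues with hlam
  set mu := hσ'.eigenvalues with hmu
  set U := (hρ'.eigenvectorUnitary : Matrix (Fin n) (Fin n) ℝ) with hUdef
  set V := (hσ'.eigenvectorUnitary : Matrix (Fin n) (Fin n) ℝ) with hVdef
  set W := star U * V with hW
  have hUsU : star U * U = 1 := Unitary.coe_star_mul_self hρ'.eigenvectorUnitary
  have hUUs : U * star U = 1 := Unitary.coe_mul_star_self hρ'.eigenvectorUnitary
  have hVsV : star V * V = 1 := Unitary.coe_star_mul_self hσ'.eigenvectorUnitary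
  have hVVs : V * star V = 1 := Unitary.coe_mul_star_self hσ'.eigenvectorUnitary
  have hlam0 : ∀ i, 0 ≤ lam i := hρ.eigenvalues_nonneg
  have hmu0 : ∀ j, 0 < mu j := hσ.eigenvalues_pos
  have hWW : W * star W = 1 := by
    rw [hW, StarMul.star_mul, star_star]
    have : star U * V * (star V * U) = star U * (V * star V) * U := by
      simp only [mul_assoc]
    rw [this, hVVs, mul_one, hUsU]
  have hsWW : star W * W = 1 := by
    rw [hW, StarMul.star_mul, star_star]
    have : star V * U * (star U * V) = star V * (U * star U) * V := by
      simp only [mul_assoc]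
    rw [this, hUUs, mul_one, hVsV]
  have hWrow : ∀ i, ∑ j, (W i j)^2 = 1 := by
    intro i
    have h := congrArg (fun M : Matrix (Fin n) (Fin n) ℝ => M i i) hWW
    simp only [Matrix.mul_apply, Matrix.star_apply, star_trivial, Matrix.one_apply_eq] at h
    simpa [sq] using h
  have hWcol : ∀ j, ∑ i, (W i j)^2 = 1 := by
    intro j
    have h := congrArg (fun M : Matrix (Fin n) (Fin n) ℝ => M j j) hsWW
    simp only [Matrix.mul_apply, Matrix.star_apply, star_trivial, Matrix.one_apply_eq] at h
    simpa [sq] using h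
  have hlamsum : ∑ i, lam i = 1 := by
    rw [hlam, ← trace_eq_sum_eig ρ hρ', hρtr]
  have hmusum : ∑ j, mu j = 1 := by
    rw [hmu, ← trace_eq_sum_eig σ hσ', hσtr]
  have htr : (ρ * matLog σ).trace = ∑ i, ∑ j, lam i * (W i j)^2 * Real.log (mu j) := by
    unfold matLog
    rw [dif_pos hσ', trace_mul_cfc ρ σ hρ' hσ' Real.log]
  have hself : trMatrixLogSelf ρ = ∑ i, lam i * Real.log (lam i) := by
    unfold trMatrixLogSelf
    rw [dif_pos hρ']
  have hinner : ∀ i, ∑ j, (W i j)^2 * (lam i * Real.log (lam i) - lam i * Real.log (mu j))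
      = lam i * Real.log (lam i) - ∑ j, lam i * (W i j)^2 * Real.log (mu j) := by
    intro i
    have h1 : ∑ j, (W i j)^2 * (lam i * Real.log (lam i)) = lam i * Real.log (lam i) := by
      rw [← Finset.sum_mul, hWrow i, one_mul]
    calc ∑ j, (W i j)^2 * (lam i * Real.log (lam i) - lam i * Real.log (mu j))
        = ∑ j, ((W i j)^2 * (lam i * Real.log (lam i))
            - lam i * (W i j)^2 * Real.log (mu j)) :=
          Finset.sum_congr rfl fun j _ => by ring
      _ = _ := by rw [Finset.sum_sub_distrib, h1]
  have hD : trMatrixLogSelf ρ - (ρ * matLog σ).trace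
      = ∑ i, ∑ j, (W i j)^2 * (lam i * Real.log (lam i) - lam i * Real.log (mu j)) := by
    rw [hself, htr, Finset.sum_congr rfl fun i (_ : i ∈ Finset.univ) => hinner i,
      Finset.sum_sub_distrib]
  have hzero : ∑ i, ∑ j, (W i j)^2 * (lam i - mu j) = 0 := by
    have hsplit : ∑ i, ∑ j, (W i j)^2 * (lam i - mu j)
        = (∑ i, ∑ j, (W i j)^2 * lam i) - ∑ i, ∑ j, (W i j)^2 * mu j := by
      simp [mul_sub, Finset.sum_sub_distrib]
    have h1 : ∑ i, ∑ j, (W i j)^2 * lam i = 1 := by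
      have : ∀ i, ∑ j, (W i j)^2 * lam i = lam i := by
        intro i; rw [← Finset.sum_mul, hWrow i, one_mul]
      rw [Finset.sum_congr rfl fun i _ => this i, hlamsum]
    have h2 : ∑ i, ∑ j, (W i j)^2 * mu j = 1 := by
      rw [Finset.sum_comm]
      have : ∀ j, ∑ i, (W i j)^2 * mu j = mu j := by
        intro j; rw [← Finset.sum_mul, hWcol j, one_mul]
      rw [Finset.sum_congr rfl fun j _ => this j, hmusum]
    rw [hsplit, h1, h2, sub_self]
  have hpt : ∀ i j, (W i j)^2 * (lam i - mu j)
      ≤ (W i j)^2 * (lam i * Real.log (lam i) - lam i * Real.log (mu j)) :=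
    fun i j => mul_le_mul_of_nonneg_left (klein_pt (hlam0 i) (hmu0 j)) (sq_nonneg _)
  have hge : 0 ≤ trMatrixLogSelf ρ - (ρ * matLog σ).trace := by
    rw [hD, ← hzero]
    exact Finset.sum_le_sum fun i _ => Finset.sum_le_sum fun j _ => hpt i j
  refine ⟨hge, ⟨fun h0 => ?_, reverse⟩⟩
  -- equality case: each term must be tight
  have hFsum : ∑ i, ∑ j, ((W i j)^2 * (lam i * Real.log (lam i) - lam i * Real.log (mu j))
      - (W i j)^2 * (lam i - mu j)) = 0 := by
    have : ∑ i, ∑ j, ((W i j)^2 * (lam i * Real.log (lam i) - lam i * Real.log (mu j))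
        - (W i j)^2 * (lam i - mu j))
        = (∑ i, ∑ j, (W i j)^2 * (lam i * Real.log (lam i) - lam i * Real.log (mu j)))
          - ∑ i, ∑ j, (W i j)^2 * (lam i - mu j) := by
      simp [Finset.sum_sub_distrib]
    rw [this, ← hD, h0, hzero, sub_zero]
  have hF0 : ∀ i j, (W i j)^2 * (lam i * Real.log (lam i) - lam i * Real.log (mu j))
      - (W i j)^2 * (lam i - mu j) = 0 := by
    intro i j
    have h1 := (Finset.sum_eq_zero_iff_of_nonneg
      (fun i _ => Finset.sum_nonneg fun j _ => sub_nonneg.2 (hpt i j))).mp hFsum i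
      (Finset.mem_univ i)
    exact (Finset.sum_eq_zero_iff_of_nonneg
      (fun j _ => sub_nonneg.2 (hpt i j))).mp h1 j (Finset.mem_univ j)
  have hkey : ∀ i j, W i j ≠ 0 → lam i = mu j := by
    intro i j hne
    have hp : (0:ℝ) < (W i j)^2 := by positivity
    have h2 : (W i j)^2 * (lam i * Real.log (lam i) - lam i * Real.log (mu j))
        = (W i j)^2 * (lam i - mu j) := by linarith [hF0 i j]
    exact klein_pt_eq (hlam0 i) (hmu0 j) (mul_left_cancel₀ hp.ne' h2)
  have hcomm : diagonal lam * W = W * diagonal mu := by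
    ext i j
    rw [Matrix.diagonal_mul, Matrix.mul_diagonal]
    rcases eq_or_ne (W i j) 0 with h | h
    · simp [h]
    · rw [hkey i j h]; ring
  have hUV : U * W = V := by
    rw [hW, ← mul_assoc, hUUs, one_mul]
  have hsUV : star U = W * star V := by
    rw [hW, mul_assoc, hVVs, mul_one]
  rw [hρ'.spectral_theorem, hσ'.spectral_theorem, RCLike.ofReal_real_eq_id]
  simp only [Function.comp_def, id_eq, Unitary.conjStarAlgAut_apply]
  show U * diagonal lam * star U = V * diagonal mu * star V
  calc U * diagonal lam * star U = U * diagonal lam * (W * star V) := by rw [← hsUV]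
    _ = U * (diagonal lam * W) * star V := by simp only [mul_assoc]
    _ = U * (W * diagonal mu) * star V := by rw [hcomm]
    _ = (U * W) * diagonal mu * star V := by simp only [mul_assoc]
    _ = V * diagonal mu * star V := by rw [hUV]
end

section
/- Let ρ be a fixed n×n real symmetric positive semidefinite matrix. Then the function σ ↦ −Tr(ρ log σ) is convex on the set of n×n real symmetric positive definite matrices; that is, for positive definite σ₀, σ₁ and t ∈ [0,1], −Tr(ρ log(tσ₀ + (1−t)σ₁)) ≤ −t·Tr(ρ log σ₀) − (1−t)·Tr(ρ log σ₁). -/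
open Matrix

section AuxLemmas

variable {n : ℕ}



lemma psd_smul {m : Type*} [Fintype m] {A : Matrix m m ℝ} (hA : A.PosSemidef) {c : ℝ} (hc : 0 ≤ c) :
    (c • A).PosSemidef := by
  refine .of_dotProduct_mulVec_nonneg (by rw [Matrix.IsHermitian, conjTranspose_smul, hA.1.eq, star_trivial]) fun x => ?_
  rw [smul_mulVec, dotProduct_smul]
  exact smul_nonneg hc (hA.dotProduct_mulVec_nonneg x)

lemma pd_smul {A : Matrix (Fin n) (Fin n) ℝ} (hA : A.PosDef) {c : ℝ} (hc : 0 < c) :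
    (c • A).PosDef := by
  refine .of_dotProduct_mulVec_pos (by rw [Matrix.IsHermitian, conjTranspose_smul, hA.1.eq, star_trivial]) fun x hx => ?_
  rw [smul_mulVec, dotProduct_smul]
  exact smul_pos hc (hA.dotProduct_mulVec_pos hx)

lemma psd_diag_nonneg {m : Type*} [Fintype m] [DecidableEq m] {A : Matrix m m ℝ}
    (hA : A.PosSemidef) (i : m) : 0 ≤ A i i := by
  simpa [dotProduct, mulVec, Pi.single_apply, Finset.mul_sum] using hA.dotProduct_mulVec_nonneg (Pi.single i 1)

lemma trace_mul_nonneg {ρ S : Matrix (Fin n) (Fin n) ℝ} (hρ : ρ.PosSemidef)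
    (hS : S.PosSemidef) : 0 ≤ (ρ * S).trace := by
  obtain ⟨B, hB⟩ : ∃ B : Matrix (Fin n) (Fin n) ℝ, ρ = Bᴴ * B := by
    open scoped MatrixOrder in
    exact ⟨CFC.sqrt ρ, by
      rw [← star_eq_conjTranspose, (CFC.sqrt_nonneg ρ).isSelfAdjoint.star_eq,
        CFC.sqrt_mul_sqrt_self ρ (Matrix.nonneg_iff_posSemidef.mpr hρ)]⟩
  have h1 : (ρ * S).trace = (B * S * Bᴴ).trace := by
    rw [hB]; rw [Matrix.mul_assoc, Matrix.trace_mul_comm, Matrix.mul_assoc]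
  rw [h1]
  have h2 := hS.mul_mul_conjTranspose_same B
  rw [Matrix.trace]
  exact Finset.sum_nonneg fun i _ => psd_diag_nonneg h2 i

lemma convex_pd {A B : Matrix (Fin n) (Fin n) ℝ} (hA : A.PosDef) (hB : B.PosDef)
    {t : ℝ} (ht : t ∈ Set.Icc (0:ℝ) 1) : (t • A + (1 - t) • B).PosDef := by
  obtain ⟨h0, h1⟩ := ht
  rcases eq_or_lt_of_le h0 with h|h
  · simpa [← h] using hB
  · rcases eq_or_lt_of_le h1 with h'|h'
    · simpa [h'] using hA
    · exact (pd_smul hA h).add (pd_smul hB (by linarith))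

lemma one_add_pd {A : Matrix (Fin n) (Fin n) ℝ} (hA : A.PosDef) {u : ℝ}
    (hu : u ∈ Set.Icc (0:ℝ) 1) : (1 + u • (A - 1)).PosDef := by
  have h : (1 : Matrix (Fin n) (Fin n) ℝ) + u • (A - 1) = (1 - u) • 1 + u • A := by
    rw [smul_sub, sub_smul, one_smul]; abel
  rw [h]
  obtain ⟨h0, h1⟩ := hu
  rcases eq_or_lt_of_le h0 with h'|h'
  · simpa [← h'] using Matrix.PosDef.one
  · exact Matrix.PosDef.posSemidef_add (psd_smul Matrix.PosSemidef.one (by linarith)) (pd_smul hA h')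


lemma block_psd {A : Matrix (Fin n) (Fin n) ℝ} (hA : A.PosDef) :
    (fromBlocks A 1 1 A⁻¹).PosSemidef := by
  haveI : Invertible A := A.invertibleOfIsUnitDet hA.det_pos.ne'.isUnit
  have h := (Matrix.PosDef.fromBlocks₁₁ (1 : Matrix (Fin n) (Fin n) ℝ) A⁻¹ hA).mpr
  rw [conjTranspose_one] at h
  apply h
  simpa using Matrix.PosSemidef.zero

lemma inv_convex {A B : Matrix (Fin n) (Fin n) ℝ} (hA : A.PosDef) (hB : B.PosDef)
    {t : ℝ} (ht : t ∈ Set.Icc (0:ℝ) 1) :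
    (t • A⁻¹ + (1 - t) • B⁻¹ - (t • A + (1 - t) • B)⁻¹).PosSemidef := by
  obtain ⟨h0, h1⟩ := ht
  have hC : (t • A + (1 - t) • B).PosDef := convex_pd hA hB ⟨h0, h1⟩
  haveI : Invertible (t • A + (1 - t) • B) :=
    (t • A + (1 - t) • B).invertibleOfIsUnitDet hC.det_pos.ne'.isUnit
  have hsum : (fromBlocks (t • A + (1 - t) • B) 1 1 (t • A⁻¹ + (1 - t) • B⁻¹)).PosSemidef := by
    have h := (psd_smul (block_psd hA) h0).add (psd_smul (block_psd hB) (by linarith : (0:ℝ) ≤ 1 - t))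
    have he : t • fromBlocks A 1 1 A⁻¹ + (1 - t) • fromBlocks B 1 1 B⁻¹ =
        fromBlocks (t • A + (1 - t) • B) 1 1 (t • A⁻¹ + (1 - t) • B⁻¹) := by
      rw [Matrix.fromBlocks_smul, Matrix.fromBlocks_smul, Matrix.fromBlocks_add]
      congr 1 <;> simp [← add_smul]
    rwa [he] at h
  have h := (Matrix.PosDef.fromBlocks₁₁ (1 : Matrix (Fin n) (Fin n) ℝ)
      (t • A⁻¹ + (1 - t) • B⁻¹) hC).mp
  rw [conjTranspose_one] at h
  have := h hsum
  simpa using this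

end AuxLemmas

section AuxLemmas2
open intervalIntegral
variable {n : ℕ}

lemma cdiag_mul {U : Matrix (Fin n) (Fin n) ℝ} (hU : star U * U = 1) (d e : Fin n → ℝ) :
    (U * diagonal d * star U) * (U * diagonal e * star U)
      = U * diagonal (fun i => d i * e i) * star U := by
  have h : (U * diagonal d * star U) * (U * diagonal e * star U)
      = U * (diagonal d * (star U * U) * diagonal e) * star U := by
    simp only [Matrix.mul_assoc]
  rw [h, hU, Matrix.mul_one, Matrix.diagonal_mul_diagonal]

lemma cdiag_inv {U : Matrix (Fin n) (Fin n) ℝ} (hU1 : U * star U = 1) (hU2 : star U * U = 1)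
    {e : Fin n → ℝ} (he : ∀ i, e i ≠ 0) :
    (U * diagonal e * star U)⁻¹ = U * diagonal (fun i => (e i)⁻¹) * star U := by
  apply Matrix.inv_eq_right_inv
  rw [cdiag_mul hU2]
  have h : (fun i => e i * (e i)⁻¹) = fun _ => (1:ℝ) := funext fun i => mul_inv_cancel₀ (he i)
  rw [h, Matrix.diagonal_one, Matrix.mul_one, hU1]

lemma trace_cdiag (ρ : Matrix (Fin n) (Fin n) ℝ) (U : Matrix (Fin n) (Fin n) ℝ)
    (d : Fin n → ℝ) :
    (ρ * (U * diagonal d * star U)).trace = ∑ i, (star U * ρ * U) i i * d i := by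
  have h : ρ * (U * diagonal d * star U) = (ρ * U * diagonal d) * star U := by
    simp only [Matrix.mul_assoc]
  rw [h, Matrix.trace_mul_comm]
  have h2 : star U * (ρ * U * diagonal d) = (star U * ρ * U) * diagonal d := by
    simp only [Matrix.mul_assoc]
  rw [h2, Matrix.trace]
  simp [Matrix.diag, Matrix.mul_diagonal]

lemma exists_repr (ρ σ : Matrix (Fin n) (Fin n) ℝ) (hσ : σ.PosDef) :
    ∃ (w μ : Fin n → ℝ), (∀ i, 0 < μ i) ∧
      (ρ * matLog σ).trace = ∑ i, w i * Real.log (μ i) ∧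
      ∀ u ∈ Set.Icc (0:ℝ) 1,
        (ρ * ((σ - 1) * (1 + u • (σ - 1))⁻¹)).trace
          = ∑ i, w i * ((μ i - 1) / (1 + u * (μ i - 1))) := by
  have h := hσ.1
  set U : Matrix (Fin n) (Fin n) ℝ := (Matrix.IsHermitian.eigenvectorUnitary h : Matrix (Fin n) (Fin n) ℝ) with hUdef
  have hU1 : U * star U = 1 := (Matrix.mem_unitaryGroup_iff).mp (Matrix.IsHermitian.eigenvectorUnitary h).2
  have hU2 : star U * U = 1 := (Matrix.mem_unitaryGroup_iff').mp (Matrix.IsHermitian.eigenvectorUnitary h).2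
  set μ := Matrix.IsHermitian.eigenvalues h with hμdef
  have hμpos : ∀ i, 0 < μ i := fun i => hσ.eigenvalues_pos i
  have hone : (1 : Matrix (Fin n) (Fin n) ℝ) = U * diagonal (fun _ => (1:ℝ)) * star U := by
    rw [Matrix.diagonal_one, Matrix.mul_one, hU1]
  have hσd : σ = U * diagonal μ * star U := by
    have hs := Matrix.IsHermitian.spectral_theorem h
    simpa [RCLike.ofReal_real_eq_id] using hs
  have hlog : matLog σ = U * diagonal (fun i => Real.log (μ i)) * star U := by
    rw [matLog, dif_pos h, Matrix.IsHermitian.cfc]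
    simp [RCLike.ofReal_real_eq_id, Function.comp_def]
    rfl
  refine ⟨fun i => (star U * ρ * U) i i, μ, hμpos, ?_, ?_⟩
  · rw [hlog, trace_cdiag]
  · intro u hu
    have hd : σ - 1 = U * diagonal (fun i => μ i - 1) * star U := by
      rw [hσd]
      conv_lhs => rw [hone]
      rw [← Matrix.sub_mul, ← Matrix.mul_sub, Matrix.diagonal_sub]
    have hden : ∀ i, (0:ℝ) < 1 + u * (μ i - 1) := by
      intro i; obtain ⟨h0, h1⟩ := hu
      rcases eq_or_lt_of_le h0 with h'|h'
      · simp [← h']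
      · nlinarith [mul_pos h' (hμpos i)]
    have hN : (1 : Matrix (Fin n) (Fin n) ℝ) + u • (σ - 1)
        = U * diagonal (fun i => 1 + u * (μ i - 1)) * star U := by
      rw [hd]
      nth_rewrite 1 [hone]
      have hsm : u • (U * diagonal (fun i => μ i - 1) * star U)
          = U * diagonal (fun i => u * (μ i - 1)) * star U := by
        have : diagonal (fun i => u * (μ i - 1)) = u • diagonal (fun i => μ i - 1) := by
          rw [← Matrix.diagonal_smul]; rfl
        rw [this]
        simp [smul_mul_assoc, mul_smul_comm]
      rw [hsm, ← Matrix.add_mul, ← Matrix.mul_add, Matrix.diagonal_add]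
    rw [hN, hd, cdiag_inv hU1 hU2 (fun i => (hden i).ne'), cdiag_mul hU2, trace_cdiag]
    simp [div_eq_mul_inv]

lemma den_pos {m u : ℝ} (hm : 0 < m) (h0 : 0 ≤ u) (h1 : u ≤ 1) : 0 < 1 + u * (m - 1) := by
  rcases eq_or_lt_of_le h0 with h'|h'
  · simp [← h']
  · nlinarith [mul_pos h' hm]

lemma cont_g {m : ℝ} (hm : 0 < m) :
    ContinuousOn (fun u : ℝ => (m - 1) / (1 + u * (m - 1))) (Set.uIcc 0 1) := by
  apply ContinuousOn.div continuousOn_const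
  · fun_prop
  · intro u hu
    rw [Set.uIcc_of_le zero_le_one] at hu
    exact (den_pos hm hu.1 hu.2).ne'

lemma integral_g {m : ℝ} (hm : 0 < m) :
    ∫ u in (0:ℝ)..1, (m - 1) / (1 + u * (m - 1)) = Real.log m := by
  have hderiv : ∀ u ∈ Set.uIcc (0:ℝ) 1,
      HasDerivAt (fun v => Real.log (1 + v * (m - 1))) ((m - 1) / (1 + u * (m - 1))) u := by
    intro u hu
    rw [Set.uIcc_of_le zero_le_one] at hu
    have h1 : HasDerivAt (fun v : ℝ => 1 + v * (m - 1)) (m - 1) u := by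
      simpa using ((hasDerivAt_id u).mul_const (m - 1)).const_add 1
    have h2 := (Real.hasDerivAt_log (den_pos hm hu.1 hu.2).ne').comp u h1
    simpa [div_eq_inv_mul, Function.comp_def] using h2
  rw [integral_eq_sub_of_hasDerivAt hderiv ((cont_g hm).intervalIntegrable)]
  norm_num
lemma key_repr (ρ σ : Matrix (Fin n) (Fin n) ℝ) (hσ : σ.PosDef) :
    (ρ * matLog σ).trace
        = (∫ u in (0:ℝ)..1, (ρ * ((σ - 1) * (1 + u • (σ - 1))⁻¹)).trace) ∧
      IntervalIntegrable (fun u => (ρ * ((σ - 1) * (1 + u • (σ - 1))⁻¹)).trace)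
        MeasureTheory.volume 0 1 := by
  obtain ⟨w, μ, hμ, hlog, hG⟩ := exists_repr ρ σ hσ
  have hEq : Set.EqOn (fun u => (ρ * ((σ - 1) * (1 + u • (σ - 1))⁻¹)).trace)
      (fun u => ∑ i, w i * ((μ i - 1) / (1 + u * (μ i - 1)))) (Set.uIcc 0 1) := by
    intro u hu
    rw [Set.uIcc_of_le zero_le_one] at hu
    exact hG u hu
  have contSum : ContinuousOn (fun u => ∑ i, w i * ((μ i - 1) / (1 + u * (μ i - 1))))
      (Set.uIcc 0 1) :=
    continuousOn_finset_sum _ fun i _ => continuousOn_const.mul (cont_g (hμ i))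
  constructor
  · rw [hlog, integral_congr hEq, integral_finset_sum (f := fun i u => w i * ((μ i - 1) / (1 + u * (μ i - 1))))
      (fun i _ => (continuousOn_const.mul (cont_g (hμ i))).intervalIntegrable)]
    congr 1
    funext i
    rw [integral_const_mul, integral_g (hμ i)]
  · exact (contSum.congr hEq).intervalIntegrable
variable {n : ℕ}

lemma smul_trace_eq (ρ N : Matrix (Fin n) (Fin n) ℝ) (c : ℝ) :
    (ρ * (c • (1 - N))).trace = c * (ρ.trace - (ρ * N).trace) := by
  rw [Matrix.mul_smul, Matrix.trace_smul, Matrix.mul_sub, Matrix.mul_one, Matrix.trace_sub]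
  rfl

lemma G_identity {X : Matrix (Fin n) (Fin n) ℝ} {u : ℝ} (hu : u ≠ 0)
    (hN : (1 + u • (X - 1)).PosDef) :
    (X - 1) * (1 + u • (X - 1))⁻¹ = u⁻¹ • (1 - (1 + u • (X - 1))⁻¹) := by
  set N := 1 + u • (X - 1) with hNdef
  have h1 : (u • (X - 1)) * N⁻¹ = 1 - N⁻¹ := by
    have h2 : u • (X - 1) = N - 1 := by rw [hNdef]; abel
    rw [h2, Matrix.sub_mul, Matrix.mul_nonsing_inv _ hN.det_pos.ne'.isUnit, Matrix.one_mul]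
  have h3 : u • ((X - 1) * N⁻¹) = 1 - N⁻¹ := by rw [← smul_mul_assoc]; exact h1
  calc (X - 1) * N⁻¹ = u⁻¹ • (u • ((X - 1) * N⁻¹)) := (inv_smul_smul₀ hu _).symm
    _ = u⁻¹ • (1 - N⁻¹) := by rw [h3]

lemma pointwise_ineq {ρ : Matrix (Fin n) (Fin n) ℝ} (hρ : ρ.PosSemidef)
    {A B : Matrix (Fin n) (Fin n) ℝ} (hA : A.PosDef) (hB : B.PosDef)
    {t : ℝ} (ht : t ∈ Set.Icc (0:ℝ) 1) {u : ℝ} (hu : u ∈ Set.Icc (0:ℝ) 1) :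
    t * (ρ * ((A - 1) * (1 + u • (A - 1))⁻¹)).trace
      + (1 - t) * (ρ * ((B - 1) * (1 + u • (B - 1))⁻¹)).trace
    ≤ (ρ * ((t • A + (1 - t) • B - 1) * (1 + u • (t • A + (1 - t) • B - 1))⁻¹)).trace := by
  have hC : (t • A + (1 - t) • B).PosDef := convex_pd hA hB ht
  rcases eq_or_lt_of_le hu.1 with h0|h0
  · -- u = 0 : equality by linearity of the trace
    simp only [← h0, zero_smul, add_zero, inv_one, Matrix.mul_one]
    have e1 : ∀ X : Matrix (Fin n) (Fin n) ℝ,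
        (ρ * (X - 1)).trace = (ρ * X).trace - ρ.trace := by
      intro X; rw [Matrix.mul_sub, Matrix.mul_one, Matrix.trace_sub]
    have e2 : (ρ * (t • A + (1 - t) • B)).trace
        = t * (ρ * A).trace + (1 - t) * (ρ * B).trace := by
      rw [Matrix.mul_add, Matrix.mul_smul, Matrix.mul_smul, Matrix.trace_add,
        Matrix.trace_smul, Matrix.trace_smul]
      rfl
    rw [e1, e1, e1 (t • A + (1 - t) • B), e2]
    apply le_of_eq
    ring
  · -- u > 0
    set A' := 1 + u • (A - 1) with hA'def
    set B' := 1 + u • (B - 1) with hB'def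
    have hA' : A'.PosDef := one_add_pd hA hu
    have hB' : B'.PosDef := one_add_pd hB hu
    have hC'eq : 1 + u • (t • A + (1 - t) • B - 1) = t • A' + (1 - t) • B' := by
      rw [hA'def, hB'def]
      module
    have hC' : (1 + u • (t • A + (1 - t) • B - 1)).PosDef := one_add_pd hC hu
    rw [G_identity h0.ne' hA', G_identity h0.ne' hB', G_identity h0.ne' hC',
      smul_trace_eq, smul_trace_eq, smul_trace_eq]
    rw [hC'eq] at hC' ⊢
    have hkey := trace_mul_nonneg hρ (inv_convex hA' hB' ht)
    have hexp : (ρ * (t • A'⁻¹ + (1 - t) • B'⁻¹ - (t • A' + (1 - t) • B')⁻¹)).trace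
        = t * (ρ * A'⁻¹).trace + (1 - t) * (ρ * B'⁻¹).trace
          - (ρ * (t • A' + (1 - t) • B')⁻¹).trace := by
      rw [Matrix.mul_sub, Matrix.mul_add, Matrix.mul_smul, Matrix.mul_smul,
        Matrix.trace_sub, Matrix.trace_add, Matrix.trace_smul, Matrix.trace_smul]
      rfl
    rw [hexp] at hkey
    have hp : (0:ℝ) < u⁻¹ := inv_pos.mpr h0
    nlinarith [mul_nonneg hp.le hkey]

end AuxLemmas2

/-- for a fixed real symmetric positive semidefinite ρ, the map
σ ↦ −Tr(ρ log σ) is convex on the positive definite matrices: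
for positive definite σ₀, σ₁ and t ∈ [0,1],
−Tr(ρ log(tσ₀ + (1−t)σ₁)) ≤ −t·Tr(ρ log σ₀) − (1−t)·Tr(ρ log σ₁). -/
theorem neg_trace_log_convex {n : ℕ} (ρ : Matrix (Fin n) (Fin n) ℝ)
    (hρ : ρ.PosSemidef)
    (σ₀ σ₁ : Matrix (Fin n) (Fin n) ℝ) (hσ₀ : σ₀.PosDef) (hσ₁ : σ₁.PosDef)
    (t : ℝ) (ht : t ∈ Set.Icc (0:ℝ) 1) :
    -(ρ * matLog (t • σ₀ + (1 - t) • σ₁)).trace ≤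
      -(t * (ρ * matLog σ₀).trace) - (1 - t) * (ρ * matLog σ₁).trace := by
  have hC : (t • σ₀ + (1 - t) • σ₁).PosDef := convex_pd hσ₀ hσ₁ ht
  obtain ⟨e0, i0⟩ := key_repr ρ σ₀ hσ₀
  obtain ⟨e1, i1⟩ := key_repr ρ σ₁ hσ₁
  obtain ⟨eC, iC⟩ := key_repr ρ _ hC
  have hint := (i0.const_mul t).add (i1.const_mul (1 - t))
  have hmono := intervalIntegral.integral_mono_on zero_le_one hint iC
    (fun u hu => pointwise_ineq hρ hσ₀ hσ₁ ht hu)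
  rw [intervalIntegral.integral_add (i0.const_mul t) (i1.const_mul (1 - t)),
    intervalIntegral.integral_const_mul, intervalIntegral.integral_const_mul] at hmono
  rw [← e0, ← e1, ← eC] at hmono
  linarith
end

section
/- Let f : (0,∞) → ℝ be convex and continuously differentiable, and let ρ, σ be n×n real symmetric matrices all of whose eigenvalues lie in (0,∞). Then the matrix Bregman divergence is nonnegative: Tr(f(ρ)) − Tr(f(σ)) − Tr(f'(σ)(ρ − σ)) ≥ 0, where f(ρ), f(σ), f'(σ) are defined by applying f and f' to the eigenvalues in the spectral decompositions of ρ and σ. -/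
open Matrix

/-- Applying a scalar function `g` to a real symmetric matrix via its spectral
decomposition (junk value `0` for non-Hermitian input). -/
noncomputable def matFun {n : ℕ} (g : ℝ → ℝ) (A : Matrix (Fin n) (Fin n) ℝ) :
    Matrix (Fin n) (Fin n) ℝ :=
  if h : A.IsHermitian then h.cfc g else 0

/-- Scalar Bregman inequality. -/
lemma bregman_scalar_nonneg (f f' : ℝ → ℝ)
    (hconv : ConvexOn ℝ (Set.Ioi (0:ℝ)) f)
    (hderiv : ∀ x ∈ Set.Ioi (0:ℝ), HasDerivAt f (f' x) x)
    {a b : ℝ} (ha : 0 < a) (hb : 0 < b) :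
    0 ≤ f a - f b - f' b * (a - b) := by
  rcases lt_trichotomy a b with h | h | h
  · have := hconv.slope_le_of_hasDerivAt (Set.mem_Ioi.mpr ha) (Set.mem_Ioi.mpr hb) h (hderiv b hb)
    rw [slope_def_field, div_le_iff₀ (by linarith)] at this
    nlinarith
  · subst h; simp
  · have := hconv.le_slope_of_hasDerivAt (Set.mem_Ioi.mpr hb) (Set.mem_Ioi.mpr ha) h (hderiv b hb)
    rw [slope_def_field, le_div_iff₀ (by linarith)] at this
    nlinarith

lemma trace_key {n : ℕ} (d1 d2 : Fin n → ℝ) (W : Matrix (Fin n) (Fin n) ℝ) :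
    (diagonal d1 * (W * diagonal d2 * star W)).trace
      = ∑ j, ∑ i, d1 j * d2 i * (W j i)^2 := by
  simp only [Matrix.trace, Matrix.diag, mul_apply, diagonal_mul, mul_diagonal,
    star_apply, star_trivial, diagonal_apply]
  simp [Finset.mul_sum, mul_assoc, sq, mul_comm, mul_left_comm]

lemma conj_reduce {n : ℕ} (d1 d2 : Fin n → ℝ) (U V : Matrix (Fin n) (Fin n) ℝ) :
    (U * diagonal d1 * star U * (V * diagonal d2 * star V)).trace
      = (diagonal d1 * ((star U * V) * diagonal d2 * star (star U * V))).trace := by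
  rw [show U * diagonal d1 * star U * (V * diagonal d2 * star V)
      = U * (diagonal d1 * (star U * (V * (diagonal d2 * star V)))) from by
    simp [mul_assoc], trace_mul_comm]
  congr 1
  simp [Matrix.star_mul, star_star, mul_assoc]

lemma cfc_eq_conj {n : ℕ} {A : Matrix (Fin n) (Fin n) ℝ} (hA : A.IsHermitian) (g : ℝ → ℝ) :
    hA.cfc g = (hA.eigenvectorUnitary : Matrix (Fin n) (Fin n) ℝ)
      * diagonal (g ∘ hA.eigenvalues)
      * star (hA.eigenvectorUnitary : Matrix (Fin n) (Fin n) ℝ) := by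
  rw [Matrix.IsHermitian.cfc]; congr 1

lemma spectral_eq_conj {n : ℕ} {A : Matrix (Fin n) (Fin n) ℝ} (hA : A.IsHermitian) :
    A = (hA.eigenvectorUnitary : Matrix (Fin n) (Fin n) ℝ)
      * diagonal hA.eigenvalues
      * star (hA.eigenvectorUnitary : Matrix (Fin n) (Fin n) ℝ) := by
  conv_lhs => rw [hA.spectral_theorem]
  congr 1

/-- for f : (0,∞) → ℝ convex and continuously differentiable (with
derivative f' on (0,∞)) and ρ, σ real symmetric matrices with all eigenvalues in (0,∞)
(i.e. positive definite), the matrix Bregman divergence is nonnegative: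
Tr(f(ρ)) − Tr(f(σ)) − Tr(f'(σ)(ρ − σ)) ≥ 0. -/
theorem matrix_bregman_nonneg {n : ℕ} (f f' : ℝ → ℝ)
    (hconv : ConvexOn ℝ (Set.Ioi (0:ℝ)) f)
    (hderiv : ∀ x ∈ Set.Ioi (0:ℝ), HasDerivAt f (f' x) x)
    (hcont : ContinuousOn f' (Set.Ioi (0:ℝ)))
    (ρ σ : Matrix (Fin n) (Fin n) ℝ) (hρ : ρ.PosDef) (hσ : σ.PosDef) :
    0 ≤ (matFun f ρ).trace - (matFun f σ).trace - (matFun f' σ * (ρ - σ)).trace := by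
  have hρH : ρ.IsHermitian := hρ.1
  have hσH : σ.IsHermitian := hσ.1
  set U : Matrix (Fin n) (Fin n) ℝ := (hρH.eigenvectorUnitary : Matrix (Fin n) (Fin n) ℝ) with hU
  set V : Matrix (Fin n) (Fin n) ℝ := (hσH.eigenvectorUnitary : Matrix (Fin n) (Fin n) ℝ) with hV
  set a : Fin n → ℝ := hρH.eigenvalues with haa
  set b : Fin n → ℝ := hσH.eigenvalues with hbb
  have ha : ∀ i, 0 < a i := hρ.eigenvalues_pos
  have hb : ∀ i, 0 < b i := hσ.eigenvalues_pos
  have hUU : star U * U = 1 := mem_unitaryGroup_iff'.mp hρH.eigenvectorUnitary.2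
  have hVV : star V * V = 1 := mem_unitaryGroup_iff'.mp hσH.eigenvectorUnitary.2
  have hVV' : V * star V = 1 := mem_unitaryGroup_iff.mp hσH.eigenvectorUnitary.2
  set W : Matrix (Fin n) (Fin n) ℝ := star V * U with hW
  have hWW : W * star W = 1 := by
    rw [hW, Matrix.star_mul, star_star, mul_assoc, ← mul_assoc U,
      mem_unitaryGroup_iff.mp hρH.eigenvectorUnitary.2, one_mul, hVV]
  have hWW' : star W * W = 1 := by
    rw [hW, Matrix.star_mul, star_star, mul_assoc, ← mul_assoc V, hVV', one_mul, hUU]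
  set c : Fin n → Fin n → ℝ := fun j i => (W j i) ^ 2 with hc
  have hcnn : ∀ j i, 0 ≤ c j i := fun j i => sq_nonneg _
  have hrow : ∀ j, ∑ i, c j i = 1 := by
    intro j
    have := congrFun (congrFun hWW j) j
    simp only [mul_apply, star_apply, star_trivial, one_apply_eq] at this
    rw [← this]
    exact Finset.sum_congr rfl fun i _ => (sq (W j i)).symm ▸ by ring
  have hcol : ∀ i, ∑ j, c j i = 1 := by
    intro i
    have := congrFun (congrFun hWW' i) i
    simp only [mul_apply, star_apply, star_trivial, one_apply_eq] at this
    rw [← this]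
    exact Finset.sum_congr rfl fun j _ => by ring
  -- traces
  have hT1 : (matFun f ρ).trace = ∑ i, f (a i) := by
    rw [matFun, dif_pos hρH, cfc_eq_conj, trace_mul_cycle, hUU, one_mul, trace_diagonal]
    rfl
  have hT2 : (matFun f σ).trace = ∑ j, f (b j) := by
    rw [matFun, dif_pos hσH, cfc_eq_conj, trace_mul_cycle, hVV, one_mul, trace_diagonal]
    rfl
  have hT3a : (matFun f' σ * ρ).trace = ∑ j, ∑ i, f' (b j) * a i * c j i := by
    rw [matFun, dif_pos hσH, cfc_eq_conj]
    conv_lhs => rw [spectral_eq_conj hρH]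
    rw [conj_reduce, trace_key]
    exact Finset.sum_congr rfl fun j _ => Finset.sum_congr rfl fun i _ => rfl
  have hdiag : star V * σ * V = diagonal b := by
    conv_lhs => rw [spectral_eq_conj hσH]
    show star V * (V * diagonal b * star V) * V = diagonal b
    simp only [← mul_assoc]
    rw [hVV, one_mul, mul_assoc, hVV, mul_one]
  have hT3b : (matFun f' σ * σ).trace = ∑ j, f' (b j) * b j := by
    rw [matFun, dif_pos hσH, cfc_eq_conj]
    rw [show (hσH.eigenvectorUnitary : Matrix (Fin n) (Fin n) ℝ)
        * diagonal (f' ∘ hσH.eigenvalues) * star (hσH.eigenvectorUnitary : Matrix (Fin n) (Fin n) ℝ) * σ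
        = V * (diagonal (f' ∘ b) * (star V * σ)) from by rw [hV, hbb]; simp [mul_assoc],
      trace_mul_comm,
      show diagonal (f' ∘ b) * (star V * σ) * V = diagonal (f' ∘ b) * (star V * σ * V) from by
        simp [mul_assoc],
      hdiag, diagonal_mul_diagonal, trace_diagonal]
    rfl
  have hsplit : (matFun f' σ * (ρ - σ)).trace
      = (matFun f' σ * ρ).trace - (matFun f' σ * σ).trace := by
    rw [mul_sub, trace_sub]
  rw [hT1, hT2, hsplit, hT3a, hT3b]
  -- rewrite single sums as double sums
  have h1 : ∑ i, f (a i) = ∑ j, ∑ i, c j i * f (a i) := by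
    rw [Finset.sum_comm]
    exact Finset.sum_congr rfl fun i _ => by rw [← Finset.sum_mul, hcol, one_mul]
  have h2 : ∑ j, f (b j) = ∑ j, ∑ i, c j i * f (b j) := by
    exact Finset.sum_congr rfl fun j _ => by rw [← Finset.sum_mul, hrow, one_mul]
  have h3 : ∑ j, f' (b j) * b j = ∑ j, ∑ i, c j i * (f' (b j) * b j) := by
    exact Finset.sum_congr rfl fun j _ => by rw [← Finset.sum_mul, hrow, one_mul]
  have key : ∑ i, f (a i) - ∑ j, f (b j)
      - (∑ j, ∑ i, f' (b j) * a i * c j i - ∑ j, f' (b j) * b j)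
      = ∑ j, ∑ i, c j i * (f (a i) - f (b j) - f' (b j) * (a i - b j)) := by
    rw [h1, h2, h3]
    rw [← Finset.sum_sub_distrib, ← Finset.sum_sub_distrib, ← Finset.sum_sub_distrib]
    refine Finset.sum_congr rfl fun j _ => ?_
    rw [← Finset.sum_sub_distrib, ← Finset.sum_sub_distrib, ← Finset.sum_sub_distrib]
    exact Finset.sum_congr rfl fun i _ => by ring
  rw [key]
  refine Finset.sum_nonneg fun j _ => Finset.sum_nonneg fun i _ => ?_
  exact mul_nonneg (hcnn j i)
    (bregman_scalar_nonneg f f' hconv hderiv (ha i) (hb j))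
end

section
/- Let A₁,…,A_m be n×n real symmetric matrices, τ ∈ ℝ^m, and let Γ_τ := {ρ density matrix : Tr(ρ A_j) = τ_j for j = 1,…,m}. Suppose ρ_τ ∈ Γ_τ is positive definite and there exist scalars c, β₁,…,β_m with log ρ_τ = cI + ∑_{j=1}^m β_j A_j. Then ρ_τ is minimax optimal for the quantum log loss: sup_{ρ ∈ Γ_τ} (−Tr(ρ log ρ_τ)) = S(ρ_τ), and for every positive definite density matrix σ, sup_{ρ ∈ Γ_τ} (−Tr(ρ log σ)) ≥ S(ρ_τ). -/
open Matrix

/-- The von Neumann entropy `S(ρ) := −∑ᵢ λᵢ log λᵢ` of a real symmetric matrix `ρ` with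
eigenvalues `λᵢ`, with the convention `0 · log 0 = 0` (note `Real.log 0 = 0`). Junk value
`0` for non-Hermitian input. -/
noncomputable def vnEntropy {n : ℕ} (ρ : Matrix (Fin n) (Fin n) ℝ) : ℝ :=
  if h : ρ.IsHermitian then -∑ i, h.eigenvalues i * Real.log (h.eigenvalues i) else 0

/-- The constraint set Γ_τ of density matrices ρ with Tr(ρ A_j) = τ_j for all j. -/
def GammaTau {n m : ℕ} (A : Fin m → Matrix (Fin n) (Fin n) ℝ) (τ : Fin m → ℝ) :
    Set (Matrix (Fin n) (Fin n) ℝ) :=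
  {ρ | ρ.PosSemidef ∧ ρ.trace = 1 ∧ ∀ j, (ρ * A j).trace = τ j}


lemma trace_conj_mul_conj {n : ℕ} (U V : Matrix (Fin n) (Fin n) ℝ) (d e : Fin n → ℝ) :
    ((U * diagonal d * star U) * (V * diagonal e * star V)).trace
      = ∑ j, ∑ i, d i * ((star U * V) i j)^2 * e j := by
  set W := star U * V with hW
  have h1 : (U * diagonal d * star U) * (V * diagonal e * star V)
      = U * (diagonal d * W * diagonal e * star V) := by
    rw [hW]; noncomm_ring
  have h2 : diagonal d * W * diagonal e * star V * U = diagonal d * W * diagonal e * star W := by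
    rw [hW, StarMul.star_mul, star_star]; noncomm_ring
  have h3 : ∀ k j, (diagonal d * W * diagonal e) k j = d k * W k j * e j := by
    intro k j; rw [Matrix.mul_diagonal, Matrix.diagonal_mul]
  rw [h1, trace_mul_comm, h2]
  simp only [Matrix.trace, diag_apply, Matrix.mul_apply, h3, star_eq_conjTranspose,
    conjTranspose_apply, star_trivial]
  rw [Finset.sum_comm]
  refine Finset.sum_congr rfl fun j _ => Finset.sum_congr rfl fun i _ => ?_
  ring

lemma comp_ofReal_real {α : Type*} (g : α → ℝ) : (RCLike.ofReal ∘ g : α → ℝ) = g := by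
  ext i; simp [RCLike.ofReal_real_eq_id]

lemma spectral_real {n : ℕ} {ρ : Matrix (Fin n) (Fin n) ℝ} (h : ρ.IsHermitian) :
    ρ = (h.eigenvectorUnitary : Matrix (Fin n) (Fin n) ℝ) * diagonal h.eigenvalues
      * star (h.eigenvectorUnitary : Matrix (Fin n) (Fin n) ℝ) := by
  conv_lhs => rw [h.spectral_theorem]
  rw [comp_ofReal_real]
  rfl

lemma cfc_real {n : ℕ} {ρ : Matrix (Fin n) (Fin n) ℝ} (h : ρ.IsHermitian) (f : ℝ → ℝ) :
    h.cfc f = (h.eigenvectorUnitary : Matrix (Fin n) (Fin n) ℝ)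
      * diagonal (f ∘ h.eigenvalues)
      * star (h.eigenvectorUnitary : Matrix (Fin n) (Fin n) ℝ) := by
  rw [Matrix.IsHermitian.cfc, ← Function.comp_assoc, comp_ofReal_real]
  rfl

lemma star_mul_self_unitary {n : ℕ} {ρ : Matrix (Fin n) (Fin n) ℝ} (h : ρ.IsHermitian) :
    star (h.eigenvectorUnitary : Matrix (Fin n) (Fin n) ℝ)
      * (h.eigenvectorUnitary : Matrix (Fin n) (Fin n) ℝ) = 1 :=
  Unitary.star_mul_self_of_mem (SetLike.coe_mem _)

lemma trace_mul_cfc_s13 {n : ℕ} {ρ : Matrix (Fin n) (Fin n) ℝ} (h : ρ.IsHermitian) (f : ℝ → ℝ) :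
    (ρ * h.cfc f).trace = ∑ i, h.eigenvalues i * f (h.eigenvalues i) := by
  have e1 : ρ * h.cfc f
      = ((h.eigenvectorUnitary : Matrix (Fin n) (Fin n) ℝ) * diagonal h.eigenvalues
          * star (h.eigenvectorUnitary : Matrix (Fin n) (Fin n) ℝ))
        * ((h.eigenvectorUnitary : Matrix (Fin n) (Fin n) ℝ) * diagonal (f ∘ h.eigenvalues)
          * star (h.eigenvectorUnitary : Matrix (Fin n) (Fin n) ℝ)) := by
    rw [cfc_real h f, ← spectral_real h]
  rw [e1, trace_conj_mul_conj, Finset.sum_comm, star_mul_self_unitary h]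
  simp [Matrix.one_apply, ite_pow]

lemma sum_eigenvalues_eq_trace {n : ℕ} {ρ : Matrix (Fin n) (Fin n) ℝ} (h : ρ.IsHermitian) :
    ∑ i, h.eigenvalues i = ρ.trace := by
  conv_rhs => rw [spectral_real h]
  rw [trace_mul_cycle, star_mul_self_unitary h, one_mul, trace_diagonal]

lemma klein_scalar {n : ℕ} (lam mu : Fin n → ℝ) (P : Fin n → Fin n → ℝ)
    (hlam : ∀ i, 0 < lam i) (hmu : ∀ j, 0 < mu j)
    (hP : ∀ i j, 0 ≤ P i j) (hrow : ∀ i, ∑ j, P i j = 1) (hcol : ∀ j, ∑ i, P i j = 1)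
    (hl1 : ∑ i, lam i = 1) (hm1 : ∑ j, mu j = 1) :
    ∑ i, ∑ j, lam i * P i j * Real.log (mu j) ≤ ∑ i, lam i * Real.log (lam i) := by
  set r : Fin n → ℝ := fun i => ∑ j, P i j * mu j with hr
  have hrpos : ∀ i, 0 < r i := by
    intro i
    have hex : ∃ j ∈ Finset.univ, 0 < P i j * mu j := by
      by_contra hcon
      push_neg at hcon
      have hz : ∀ j ∈ (Finset.univ : Finset (Fin n)), P i j = 0 := by
        intro j _
        rcases lt_or_eq_of_le (hP i j) with hpos | heq
        · exact absurd (mul_pos hpos (hmu j)) (not_lt.2 (hcon j (Finset.mem_univ j)))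
        · exact heq.symm
      have := hrow i
      rw [Finset.sum_congr rfl hz] at this
      simp at this
    exact Finset.sum_pos' (fun j _ => mul_nonneg (hP i j) (hmu j).le) hex
  have jensen : ∀ i, ∑ j, P i j * Real.log (mu j) ≤ Real.log (r i) := by
    intro i
    have := (strictConcaveOn_log_Ioi.concaveOn).le_map_sum
      (t := Finset.univ) (w := P i) (p := mu)
      (fun j _ => hP i j) (hrow i) (fun j _ => hmu j)
    simpa [smul_eq_mul] using this
  have step2 : ∀ i, lam i * Real.log (r i) ≤ lam i * Real.log (lam i) + (r i - lam i) := by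
    intro i
    have h := Real.log_le_sub_one_of_pos (div_pos (hrpos i) (hlam i))
    rw [Real.log_div (hrpos i).ne' (hlam i).ne'] at h
    have h2 := mul_le_mul_of_nonneg_left h (hlam i).le
    have hc : lam i * (r i / lam i) = r i := by
      rw [mul_comm]; exact div_mul_cancel₀ _ (hlam i).ne'
    rw [mul_sub, mul_sub, hc] at h2
    linarith
  have hsumr : ∑ i, r i = 1 := by
    rw [hr]
    rw [Finset.sum_comm]
    have : ∀ j, ∑ i, P i j * mu j = mu j := by
      intro j; rw [← Finset.sum_mul, hcol j, one_mul]
    rw [Finset.sum_congr rfl fun j _ => this j, hm1]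
  calc ∑ i, ∑ j, lam i * P i j * Real.log (mu j)
      = ∑ i, lam i * ∑ j, P i j * Real.log (mu j) := by
        refine Finset.sum_congr rfl fun i _ => ?_
        rw [Finset.mul_sum]
        exact Finset.sum_congr rfl fun j _ => by ring
    _ ≤ ∑ i, lam i * Real.log (r i) :=
        Finset.sum_le_sum fun i _ => mul_le_mul_of_nonneg_left (jensen i) (hlam i).le
    _ ≤ ∑ i, (lam i * Real.log (lam i) + (r i - lam i)) :=
        Finset.sum_le_sum fun i _ => step2 i
    _ = ∑ i, lam i * Real.log (lam i) := by
        rw [Finset.sum_add_distrib, Finset.sum_sub_distrib, hsumr, hl1]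
        ring

lemma psd_quad {n : ℕ} {ρ : Matrix (Fin n) (Fin n) ℝ} (h : ρ.PosSemidef) (x : Fin n → ℝ) :
    0 ≤ ∑ k, ∑ l, x k * ρ k l * x l := by
  have h2 := h.dotProduct_mulVec_nonneg x
  simp only [RCLike.re_to_real, star_trivial, dotProduct, Matrix.mulVec,
    Finset.mul_sum] at h2
  convert h2 using 1
  · rfl
  refine Finset.sum_congr rfl fun k _ => Finset.sum_congr rfl fun l _ => ?_
  ring

lemma psd_diag_nonneg_s13 {n : ℕ} {ρ : Matrix (Fin n) (Fin n) ℝ} (h : ρ.PosSemidef) (i : Fin n) :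
    0 ≤ ρ i i := by
  have := psd_quad h (Pi.single i 1)
  simpa [Pi.single_apply, Finset.sum_ite_eq, Finset.sum_ite_eq'] using this

lemma psd_diag_le_one {n : ℕ} {ρ : Matrix (Fin n) (Fin n) ℝ} (h : ρ.PosSemidef)
    (htr : ρ.trace = 1) (i : Fin n) : ρ i i ≤ 1 := by
  have hle : ρ i i ≤ ∑ k, ρ k k :=
    Finset.single_le_sum (fun k _ => psd_diag_nonneg_s13 h k) (Finset.mem_univ i)
  simpa [Matrix.trace, Matrix.diag_apply, htr] using hle.trans_eq htr

lemma psd_entry_abs_le_one {n : ℕ} {ρ : Matrix (Fin n) (Fin n) ℝ} (h : ρ.PosSemidef)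
    (htr : ρ.trace = 1) (i j : Fin n) : |ρ i j| ≤ 1 := by
  rcases eq_or_ne i j with rfl | hij
  · rw [abs_of_nonneg (psd_diag_nonneg_s13 h i)]; exact psd_diag_le_one h htr i
  · have hsym : ρ j i = ρ i j := by
      have := h.1
      calc ρ j i = ρᴴ i j := by simp [conjTranspose_apply]
        _ = ρ i j := by rw [h.1]
    have key : ∀ s : ℝ, 0 ≤ ρ i i + s * (2 * ρ i j) + s^2 * ρ j j := by
      intro s
      set x : Fin n → ℝ := fun k => (if k = i then 1 else 0) + s * (if k = j then 1 else 0)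
        with hx
      have hq := psd_quad h x
      have hexp : ∑ k, ∑ l, x k * ρ k l * x l
          = ρ i i + s * ρ i j + s * ρ j i + s ^ 2 * ρ j j := by
        simp only [hx]
        simp [mul_add, add_mul, mul_ite, ite_mul, zero_mul, mul_zero, one_mul, mul_one,
          Finset.sum_add_distrib, Finset.sum_ite_eq, Finset.sum_ite_eq', Finset.mul_sum,
          Finset.sum_mul]
        ring
      rw [hexp, hsym] at hq
      nlinarith [hq]
    have h1 := key 1
    have h2 := key (-1)
    have hii := psd_diag_le_one h htr i
    have hjj := psd_diag_le_one h htr j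
    rw [abs_le]
    constructor <;> nlinarith

lemma neg_trace_le_bound {n : ℕ} {ρ B : Matrix (Fin n) (Fin n) ℝ} (h : ρ.PosSemidef)
    (htr : ρ.trace = 1) : -((ρ * B).trace) ≤ ∑ i, ∑ j, |B j i| := by
  have htrace : (ρ * B).trace = ∑ i, ∑ j, ρ i j * B j i := by
    simp [Matrix.trace, Matrix.diag_apply, Matrix.mul_apply]
  calc -((ρ * B).trace) ≤ |(ρ * B).trace| := neg_le_abs _
    _ = |∑ i, ∑ j, ρ i j * B j i| := by rw [htrace]
    _ ≤ ∑ i, |∑ j, ρ i j * B j i| := Finset.abs_sum_le_sum_abs _ _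
    _ ≤ ∑ i, ∑ j, |ρ i j * B j i| :=
        Finset.sum_le_sum fun i _ => Finset.abs_sum_le_sum_abs _ _
    _ ≤ ∑ i, ∑ j, |B j i| := by
        refine Finset.sum_le_sum fun i _ => Finset.sum_le_sum fun j _ => ?_
        rw [abs_mul]
        calc |ρ i j| * |B j i| ≤ 1 * |B j i| :=
              mul_le_mul_of_nonneg_right (psd_entry_abs_le_one h htr i j) (abs_nonneg _)
          _ = |B j i| := one_mul _

lemma klein_matrix {n : ℕ} {ρ σ : Matrix (Fin n) (Fin n) ℝ} (hρ : ρ.PosDef) (hσ : σ.PosDef)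
    (hρtr : ρ.trace = 1) (hσtr : σ.trace = 1) :
    vnEntropy ρ ≤ -((ρ * matLog σ).trace) := by
  have hH : ρ.IsHermitian := hρ.1
  have hσH : σ.IsHermitian := hσ.1
  set U1 : Matrix (Fin n) (Fin n) ℝ := (hH.eigenvectorUnitary : Matrix (Fin n) (Fin n) ℝ)
  set U2 : Matrix (Fin n) (Fin n) ℝ := (hσH.eigenvectorUnitary : Matrix (Fin n) (Fin n) ℝ)
  set W : Matrix (Fin n) (Fin n) ℝ := star U1 * U2 with hWdef
  have hWu : W ∈ unitary (Matrix (Fin n) (Fin n) ℝ) :=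
    mul_mem (Unitary.star_mem (SetLike.coe_mem hH.eigenvectorUnitary))
      (SetLike.coe_mem hσH.eigenvectorUnitary)
  have hWWs : W * star W = 1 := Unitary.mul_star_self_of_mem hWu
  have hWsW : star W * W = 1 := Unitary.star_mul_self_of_mem hWu
  set P : Fin n → Fin n → ℝ := fun i j => (W i j) ^ 2 with hPdef
  have hrow : ∀ i, ∑ j, P i j = 1 := by
    intro i
    have h1 : (W * star W) i i = ∑ j, (W i j)^2 := by
      simp [Matrix.mul_apply, star_eq_conjTranspose, conjTranspose_apply, sq]
    have := h1.symm.trans (by rw [hWWs, Matrix.one_apply_eq])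
    simpa [hPdef] using this
  have hcol : ∀ j, ∑ i, P i j = 1 := by
    intro j
    have h1 : (star W * W) j j = ∑ i, (W i j)^2 := by
      simp [Matrix.mul_apply, star_eq_conjTranspose, conjTranspose_apply, sq]
    have := h1.symm.trans (by rw [hWsW, Matrix.one_apply_eq])
    simpa [hPdef] using this
  have htrexp : (ρ * matLog σ).trace
      = ∑ i, ∑ j, hH.eigenvalues i * P i j * Real.log (hσH.eigenvalues j) := by
    have e1 : ρ * matLog σ
        = (U1 * diagonal hH.eigenvalues * star U1)
          * (U2 * diagonal (Real.log ∘ hσH.eigenvalues) * star U2) := by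
      rw [matLog, dif_pos hσH, cfc_real hσH Real.log, ← spectral_real hH]
    rw [e1, trace_conj_mul_conj, Finset.sum_comm]
    refine Finset.sum_congr rfl fun i _ => Finset.sum_congr rfl fun j _ => ?_
    simp only [hPdef, Function.comp_apply, hWdef]
  have hklein := klein_scalar hH.eigenvalues hσH.eigenvalues P
    (fun i => hρ.eigenvalues_pos i) (fun j => hσ.eigenvalues_pos j)
    (fun i j => sq_nonneg _) hrow hcol
    ((sum_eigenvalues_eq_trace hH).trans hρtr) ((sum_eigenvalues_eq_trace hσH).trans hσtr)
  rw [vnEntropy, dif_pos hH, htrexp]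
  exact neg_le_neg hklein


/-- minimax optimality of the Gibbs state: if ρ_τ ∈ Γ_τ is positive
definite with log ρ_τ = cI + ∑_j β_j A_j, then
sup_{ρ ∈ Γ_τ} (−Tr(ρ log ρ_τ)) = S(ρ_τ), and for every positive definite density matrix
σ, sup_{ρ ∈ Γ_τ} (−Tr(ρ log σ)) ≥ S(ρ_τ). -/
theorem gibbs_minimax_optimal {n m : ℕ} (A : Fin m → Matrix (Fin n) (Fin n) ℝ)
    (hA : ∀ j, (A j).IsSymm) (τ : Fin m → ℝ)
    (ρτ : Matrix (Fin n) (Fin n) ℝ)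
    (hρτpd : ρτ.PosDef) (hρτmem : ρτ ∈ GammaTau A τ)
    (c : ℝ) (β : Fin m → ℝ)
    (hgibbs : matLog ρτ = c • (1 : Matrix (Fin n) (Fin n) ℝ) + ∑ j, β j • A j) :
    (⨆ ρ : GammaTau A τ,
        -((ρ : Matrix (Fin n) (Fin n) ℝ) * matLog ρτ).trace) = vnEntropy ρτ ∧
    ∀ σ : Matrix (Fin n) (Fin n) ℝ, σ.PosDef → σ.trace = 1 →
      vnEntropy ρτ ≤ ⨆ ρ : GammaTau A τ,
        -((ρ : Matrix (Fin n) (Fin n) ℝ) * matLog σ).trace := by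
  obtain ⟨hpsd, htr, hτ⟩ := hρτmem
  have hH : ρτ.IsHermitian := hρτpd.1
  haveI : Nonempty (GammaTau A τ) := ⟨⟨ρτ, ⟨hpsd, htr, hτ⟩⟩⟩
  have hconst : ∀ ρ : Matrix (Fin n) (Fin n) ℝ, ρ ∈ GammaTau A τ →
      -((ρ * matLog ρτ).trace) = -(c + ∑ j, β j * τ j) := by
    intro ρ hρ
    obtain ⟨_, htr', hτ'⟩ := hρ
    rw [hgibbs, mul_add, trace_add]
    have e1 : (ρ * (c • (1 : Matrix (Fin n) (Fin n) ℝ))).trace = c := by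
      rw [mul_smul_comm, mul_one, trace_smul, htr', smul_eq_mul, mul_one]
    have e2 : (ρ * ∑ j, β j • A j).trace = ∑ j, β j * τ j := by
      rw [Finset.mul_sum, trace_sum]
      refine Finset.sum_congr rfl fun j _ => ?_
      rw [mul_smul_comm, trace_smul, smul_eq_mul, hτ' j]
    rw [e1, e2]
  have hent : vnEntropy ρτ = -(c + ∑ j, β j * τ j) := by
    have h1 : vnEntropy ρτ = -((ρτ * matLog ρτ).trace) := by
      rw [vnEntropy, dif_pos hH, matLog, dif_pos hH, trace_mul_cfc_s13 hH Real.log]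
    rw [h1, hconst ρτ ⟨hpsd, htr, hτ⟩]
  constructor
  · have hval : ∀ ρ : GammaTau A τ,
        -(((ρ : Matrix (Fin n) (Fin n) ℝ) * matLog ρτ).trace) = vnEntropy ρτ := by
      intro ρ; rw [hconst ρ ρ.2, hent]
    calc (⨆ ρ : GammaTau A τ, -(((ρ : Matrix (Fin n) (Fin n) ℝ) * matLog ρτ).trace))
        = ⨆ _ : GammaTau A τ, vnEntropy ρτ := iSup_congr hval
      _ = vnEntropy ρτ := ciSup_const
  · intro σ hσpd hσtr
    have hklein := klein_matrix hρτpd hσpd htr hσtr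
    refine hklein.trans ?_
    have hbdd : BddAbove (Set.range fun ρ : GammaTau A τ =>
        -(((ρ : Matrix (Fin n) (Fin n) ℝ) * matLog σ).trace)) := by
      refine ⟨∑ i, ∑ j, |(matLog σ) j i|, ?_⟩
      rintro x ⟨ρ, rfl⟩
      exact neg_trace_le_bound ρ.2.1 ρ.2.2.1
    exact le_ciSup hbdd (⟨ρτ, ⟨hpsd, htr, hτ⟩⟩ : GammaTau A τ)
end
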